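/- arXiv:1702.02105 — 5 statements merged into one kernel-verified Lean document; each statement's English description precedes it below -/
import Mathlib

section
/- Let Q = (0,1)^N be the open unit cube in ℝ^N and A an N×N real matrix. Let u : ℝ^N → ℝ^N be continuous on the closed cube [0,1]^N, differentiable at every point of Q with derivative Du(x) (an N×N matrix), such that x ↦ tr(Du(x)) is Lebesgue integrable on Q and u(x) = Ax for every x in the boundary ∂Q. Then ∫_Q tr(Du(x)) dx = tr A. -/
open MeasureTheory Set

/-- The open unit cube `(0,1)^N` in `ℝ^N`. -/
def openCube (N : ℕ) : Set (Fin N → ℝ) := Set.univ.pi fun _ => Set.Ioo (0 : ℝ) 1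

lemma insertNth_mem_frontier_openCube (n : ℕ) (i : Fin (n+1)) (c : ℝ) (hc : c = 0 ∨ c = 1)
    (x : Fin n → ℝ)
    (hx : x ∈ Icc ((0 : Fin (n+1) → ℝ) ∘ i.succAbove) ((1 : Fin (n+1) → ℝ) ∘ i.succAbove)) :
    i.insertNth c x ∈ frontier (openCube (n+1)) := by
  have hopen : IsOpen (openCube (n+1)) := isOpen_set_pi Set.finite_univ (fun _ _ => isOpen_Ioo)
  have hcl : closure (openCube (n+1)) = Icc (0 : Fin (n+1) → ℝ) 1 := by
    rw [openCube, closure_pi_set]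
    simp [closure_Ioo (zero_ne_one' ℝ), Set.pi_univ_Icc]
    rfl
  rw [frontier, hopen.interior_eq, hcl]
  constructor
  · rw [← Set.pi_univ_Icc]
    intro j _
    rcases eq_or_ne j i with rfl | hj
    · simp only [Fin.insertNth_apply_same]
      rcases hc with rfl | rfl <;> norm_num
    · rcases Fin.exists_succAbove_eq hj with ⟨k, rfl⟩
      simp only [Fin.insertNth_apply_succAbove]
      exact ⟨(hx.1 k), (hx.2 k)⟩
  · intro h
    have := h i (Set.mem_univ i)
    rw [Fin.insertNth_apply_same] at this
    rcases hc with rfl | rfl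
    · exact lt_irrefl _ this.1
    · exact lt_irrefl _ this.2


/-- Divergence identity for competitors with affine boundary values: if `u` is continuous
on the closed unit cube, differentiable on the open cube `Q = (0,1)^N` with derivative
`Du`, `x ↦ tr(Du x)` is integrable on `Q`, and `u = Ax` on `∂Q`, then
`∫_Q tr(Du) = tr A`. -/
theorem integral_trace_fderiv_eq_trace (N : ℕ) (hN : 1 ≤ N)
    (A : Matrix (Fin N) (Fin N) ℝ)
    (u : (Fin N → ℝ) → Fin N → ℝ)
    (Du : (Fin N → ℝ) → ((Fin N → ℝ) →L[ℝ] (Fin N → ℝ)))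
    (hcont : ContinuousOn u (Set.Icc (0 : Fin N → ℝ) 1))
    (hdiff : ∀ x ∈ openCube N, HasFDerivAt u (Du x) x)
    (hint : IntegrableOn
      (fun x => LinearMap.trace ℝ (Fin N → ℝ) (Du x : (Fin N → ℝ) →ₗ[ℝ] (Fin N → ℝ)))
      (openCube N))
    (hbdry : ∀ x ∈ frontier (openCube N), u x = A.mulVec x) :
    ∫ x in openCube N,
        LinearMap.trace ℝ (Fin N → ℝ) (Du x : (Fin N → ℝ) →ₗ[ℝ] (Fin N → ℝ)) =
      A.trace := by
  obtain ⟨n, rfl⟩ : ∃ n, N = n + 1 := ⟨N - 1, (Nat.succ_pred_eq_of_pos hN).symm⟩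
  -- rewrite trace as a sum
  have htr : ∀ L : (Fin (n+1) → ℝ) →L[ℝ] (Fin (n+1) → ℝ),
      LinearMap.trace ℝ (Fin (n+1) → ℝ) ↑L = ∑ i, L (Pi.single i 1) i := by
    intro L
    rw [LinearMap.trace_eq_matrix_trace ℝ (Pi.basisFun ℝ (Fin (n+1))),
      LinearMap.toMatrix_eq_toMatrix']
    simp only [Matrix.trace, Matrix.diag, LinearMap.toMatrix'_apply]
    refine Finset.sum_congr rfl fun i _ => ?_
    have h1 : (fun j' => if j' = i then (1:ℝ) else 0) = Pi.single i 1 := by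
      funext j; simp [Pi.single_apply]
    rfl
  simp only [htr]
  -- the open cube and Ioo-pi are the same set
  have hcube : openCube (n+1) = Set.pi univ fun i => Ioo ((0 : Fin (n+1) → ℝ) i)
      ((1 : Fin (n+1) → ℝ) i) := rfl
  have hae : (Set.pi univ fun i => Ioo ((0 : Fin (n+1) → ℝ) i) ((1 : Fin (n+1) → ℝ) i))
      =ᵐ[volume] Icc (0 : Fin (n+1) → ℝ) 1 := Measure.univ_pi_Ioo_ae_eq_Icc
  rw [hcube, setIntegral_congr_set hae]
  have hdiv := integral_divergence_of_hasFDerivAt_off_countable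
    (0 : Fin (n+1) → ℝ) 1 zero_le_one u Du ∅ Set.countable_empty hcont
    (fun x hx => hdiff x hx.1)
    (by
      have := hint.congr_set_ae hae.symm
      simpa only [htr] using this)
  rw [hdiv]
  -- now compute each face contribution
  have key : ∀ i : Fin (n+1),
      ((∫ x in Icc ((0 : Fin (n+1) → ℝ) ∘ i.succAbove) ((1 : Fin (n+1) → ℝ) ∘ i.succAbove),
          u (i.insertNth ((1 : Fin (n+1) → ℝ) i) x) i) -
        ∫ x in Icc ((0 : Fin (n+1) → ℝ) ∘ i.succAbove) ((1 : Fin (n+1) → ℝ) ∘ i.succAbove),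
          u (i.insertNth ((0 : Fin (n+1) → ℝ) i) x) i) = A i i := by
    intro i
    set F : Set (Fin n → ℝ) :=
      Icc ((0 : Fin (n+1) → ℝ) ∘ i.succAbove) ((1 : Fin (n+1) → ℝ) ∘ i.succAbove) with hF
    have hrw : ∀ c : ℝ, c = 0 ∨ c = 1 → ∀ x ∈ F,
        u (i.insertNth c x) i = A i i * c + ∑ k, A i (i.succAbove k) * x k := by
      intro c hc x hx
      rw [hbdry _ (insertNth_mem_frontier_openCube n i c hc x hx)]
      simp only [Matrix.mulVec, dotProduct]
      rw [Fin.sum_univ_succAbove (f := fun j => A i j * Fin.insertNth (α := fun _ => ℝ) i c x j) i]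
      simp [Fin.insertNth_apply_same, Fin.insertNth_apply_succAbove, mul_comm]
    have hmeas : MeasurableSet F := measurableSet_Icc
    rw [setIntegral_congr_fun hmeas (hrw ((1 : Fin (n+1) → ℝ) i) (Or.inr rfl)),
      setIntegral_congr_fun hmeas (hrw ((0 : Fin (n+1) → ℝ) i) (Or.inl rfl))]
    have hintS : IntegrableOn (fun x : Fin n → ℝ => ∑ k, A i (i.succAbove k) * x k) F := by
      apply ContinuousOn.integrableOn_compact isCompact_Icc
      exact (continuous_finset_sum _ fun k _ =>
        (continuous_const.mul (continuous_apply k))).continuousOn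
    have hvol : volume F = 1 := by
      rw [hF, Real.volume_Icc_pi]
      simp
    rw [integral_add (integrableOn_const (by rw [hvol]; exact ENNReal.one_ne_top) enorm_ne_top :
          IntegrableOn (fun _ : Fin n → ℝ => A i i * (1 : Fin (n+1) → ℝ) i) F volume)
        hintS,
      integral_add (integrableOn_const (by rw [hvol]; exact ENNReal.one_ne_top) enorm_ne_top :
          IntegrableOn (fun _ : Fin n → ℝ => A i i * (0 : Fin (n+1) → ℝ) i) F volume)
        hintS]
    simp [Measure.real, hvol]
  rw [Finset.sum_congr rfl fun i _ => key i]
  simp [Matrix.trace, Matrix.diag]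
end

section
/- Let Q = (0,1)^N be the open unit cube in ℝ^N and A, B two N×N real matrices. Let u : ℝ^N → ℝ^N be continuous on the closed cube [0,1]^N, differentiable at every point of Q with derivative Du(x), with x ↦ Du(x) Lebesgue integrable on Q, u(x) = Ax for every x ∈ ∂Q, and ∫_Q Du(x) dx = B. Then tr B = tr A. Consequently, if tr(A − B) ≠ 0 there exists no jump-free (everywhere differentiable) competitor with affine boundary values Ax and average gradient B: disarrangements are necessary to realize such a structured deformation. -/
open MeasureTheory

/-- A jump-free competitor in the cell formula: `u` is continuous on the closed unit
cube, differentiable everywhere on the open cube `Q = (0,1)^N` with derivative `Du`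
integrable on `Q`, has affine boundary values `u = Ax` on `∂Q`, and average gradient
`∫_Q Du = B`. -/
def IsJumpFreeCompetitor (N : ℕ) (A B : Matrix (Fin N) (Fin N) ℝ)
    (u : (Fin N → ℝ) → Fin N → ℝ)
    (Du : (Fin N → ℝ) → ((Fin N → ℝ) →L[ℝ] (Fin N → ℝ))) : Prop :=
  ContinuousOn u (Set.Icc (0 : Fin N → ℝ) 1) ∧
  (∀ x ∈ openCube N, HasFDerivAt u (Du x) x) ∧
  IntegrableOn Du (openCube N) ∧
  (∀ x ∈ frontier (openCube N), u x = A.mulVec x) ∧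
  ∫ x in openCube N, Du x = LinearMap.toContinuousLinearMap (Matrix.mulVecLin B)

lemma openCube_ae_eq (N : ℕ) : openCube N =ᵐ[volume] Set.Icc (0 : Fin N → ℝ) 1 := by
  have hmeas : MeasurableSet (openCube N) :=
    MeasurableSet.univ_pi fun _ => measurableSet_Ioo
  refine ae_eq_of_subset_of_measure_ge ?_ ?_ hmeas.nullMeasurableSet ?_
  · rw [← Set.pi_univ_Icc]
    exact Set.pi_mono fun i _ => Set.Ioo_subset_Icc_self
  · rw [Real.volume_Icc_pi, openCube, volume_pi_pi]; simp
  · rw [Real.volume_Icc_pi]; simp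

lemma frontier_openCube (N : ℕ) :
    frontier (openCube N) = Set.Icc (0 : Fin N → ℝ) 1 \ openCube N := by
  have hopen : IsOpen (openCube N) := isOpen_set_pi Set.finite_univ fun _ _ => isOpen_Ioo
  rw [hopen.frontier_eq]
  congr 1
  rw [openCube, closure_pi_set]
  rw [← Set.pi_univ_Icc]
  ext i
  simp [closure_Ioo (one_ne_zero).symm]

set_option maxHeartbeats 1000000 in
lemma trace_aux (n : ℕ) (A B : Matrix (Fin (n+1)) (Fin (n+1)) ℝ)
    (u : (Fin (n+1) → ℝ) → Fin (n+1) → ℝ)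
    (Du : (Fin (n+1) → ℝ) → ((Fin (n+1) → ℝ) →L[ℝ] (Fin (n+1) → ℝ)))
    (h : IsJumpFreeCompetitor (n+1) A B u Du) : B.trace = A.trace := by
  obtain ⟨hc, hd, hi, hbdry, havg⟩ := h
  have hle : (0 : Fin (n+1) → ℝ) ≤ 1 := fun i => zero_le_one
  have hae := openCube_ae_eq (n+1)
  -- membership of face points in the frontier
  have hface : ∀ (i : Fin (n+1)) (c : ℝ), c = 0 ∨ c = 1 →
      ∀ x ∈ Set.Icc ((0 : Fin (n+1) → ℝ) ∘ i.succAbove) ((1 : Fin (n+1) → ℝ) ∘ i.succAbove),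
      i.insertNth c x ∈ frontier (openCube (n+1)) := by
    intro i c hc01 x hx
    rw [frontier_openCube]
    refine ⟨Fin.insertNth_mem_Icc.2 ⟨?_, hx⟩, ?_⟩
    · rcases hc01 with rfl | rfl <;> constructor <;> norm_num
    · intro hmem
      have := hmem i (Set.mem_univ i)
      rw [Fin.insertNth_apply_same] at this
      rcases hc01 with rfl | rfl
      · exact lt_irrefl _ this.1
      · exact lt_irrefl _ this.2
  -- integrability of the divergence of u on Icc
  have hiv : ∀ i : Fin (n+1), Integrable (fun x => Du x (Pi.single i 1))
      (volume.restrict (openCube (n+1))) := fun i => hi.apply_continuousLinearMap (Pi.single i 1)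
  have hi' : ∀ i : Fin (n+1), Integrable (fun x => Du x (Pi.single i 1) i)
      (volume.restrict (openCube (n+1))) := fun i =>
    (ContinuousLinearMap.proj (R := ℝ) (φ := fun _ : Fin (n+1) => ℝ) i).integrable_comp (hiv i)
  have hdiv_int : IntegrableOn (fun x => ∑ i, Du x (Pi.single i 1) i)
      (Set.Icc (0 : Fin (n+1) → ℝ) 1) := by
    rw [IntegrableOn, ← Measure.restrict_congr_set hae]
    exact integrable_finset_sum _ fun i _ => hi' i
  -- divergence theorem for u
  have hdivu := integral_divergence_of_hasFDerivAt_off_countable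
      (0 : Fin (n+1) → ℝ) 1 hle u Du ∅ Set.countable_empty hc
      (fun x hx => hd x hx.1) hdiv_int
  -- the constant derivative of the affine map
  set M : (Fin (n+1) → ℝ) →L[ℝ] (Fin (n+1) → ℝ) := LinearMap.toContinuousLinearMap A.mulVecLin with hM
  have hdivg := integral_divergence_of_hasFDerivAt_off_countable
      (0 : Fin (n+1) → ℝ) 1 hle (fun x => A.mulVec x) (fun _ => M) ∅ Set.countable_empty
      (M.continuous.continuousOn)
      (fun x _ => M.hasFDerivAt)
      (by
        refine integrableOn_const ?_ (by simp)
        rw [Real.volume_Icc_pi]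
        simp)
  -- boundary terms agree
  have hbd : ∀ (i : Fin (n+1)) (c : ℝ), c = 0 ∨ c = 1 →
      (∫ x in Set.Icc ((0 : Fin (n+1) → ℝ) ∘ i.succAbove) ((1 : Fin (n+1) → ℝ) ∘ i.succAbove),
        u (i.insertNth c x) i)
      = ∫ x in Set.Icc ((0 : Fin (n+1) → ℝ) ∘ i.succAbove) ((1 : Fin (n+1) → ℝ) ∘ i.succAbove),
        A.mulVec (i.insertNth c x) i := by
    intro i c hc01
    refine setIntegral_congr_fun measurableSet_Icc ?_
    intro x hx
    exact congrFun (hbdry _ (hface i c hc01 x hx)) i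
  -- evaluate the LHS for u : it equals tr B
  have hLHSu : (∫ x in Set.Icc (0 : Fin (n+1) → ℝ) 1, ∑ i, Du x (Pi.single i 1) i)
      = B.trace := by
    rw [← setIntegral_congr_set hae]
    rw [integral_finset_sum _ fun i _ => hi' i]
    have : ∀ i : Fin (n+1), (∫ x in openCube (n+1), Du x (Pi.single i 1) i) = B i i := by
      intro i
      have h1 : (∫ x in openCube (n+1), Du x (Pi.single i 1)) =
          (∫ x in openCube (n+1), Du x) (Pi.single i 1) :=
        (ContinuousLinearMap.integral_apply hi (Pi.single i 1)).symm
      have h2 : (∫ x in openCube (n+1), Du x (Pi.single i 1) i) =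
          (∫ x in openCube (n+1), Du x (Pi.single i 1)) i :=
        ((ContinuousLinearMap.proj (R := ℝ) (φ := fun _ : Fin (n+1) => ℝ)
          i).integral_comp_comm (hiv i))
      rw [h2, h1, havg]
      simp [Matrix.mulVec_single]
    rw [Finset.sum_congr rfl fun i _ => this i]
    simp [Matrix.trace, Matrix.diag]
  -- evaluate the LHS for the affine map : it equals tr A
  have hLHSg : (∫ x in Set.Icc (0 : Fin (n+1) → ℝ) 1, ∑ i, M (Pi.single i 1) i)
      = A.trace := by
    rw [setIntegral_const]
    have hv : volume (Set.Icc (0 : Fin (n+1) → ℝ) 1) = 1 := by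
      rw [Real.volume_Icc_pi]; simp
    rw [measureReal_def, hv]
    simp only [ENNReal.toReal_one, one_smul, hM]
    simp [Matrix.mulVec_single, Matrix.trace, Matrix.diag]
  rw [hLHSu] at hdivu
  rw [hLHSg] at hdivg
  rw [hdivu, hdivg]
  refine Finset.sum_congr rfl fun i _ => ?_
  rw [hbd i ((1 : Fin (n+1) → ℝ) i) (Or.inr rfl), hbd i ((0 : Fin (n+1) → ℝ) i) (Or.inl rfl)]

/-- Any jump-free competitor with boundary values `Ax` and average gradient `B`
satisfies `tr B = tr A`; consequently, if `tr(A − B) ≠ 0` no jump-free competitor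
exists: disarrangements are necessary. -/
theorem trace_eq_of_jumpFreeCompetitor (N : ℕ) (hN : 1 ≤ N)
    (A B : Matrix (Fin N) (Fin N) ℝ) :
    (∀ (u : (Fin N → ℝ) → Fin N → ℝ)
        (Du : (Fin N → ℝ) → ((Fin N → ℝ) →L[ℝ] (Fin N → ℝ))),
      IsJumpFreeCompetitor N A B u Du → B.trace = A.trace) ∧
    (Matrix.trace (A - B) ≠ 0 →
      ¬ ∃ (u : (Fin N → ℝ) → Fin N → ℝ)
          (Du : (Fin N → ℝ) → ((Fin N → ℝ) →L[ℝ] (Fin N → ℝ))),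
        IsJumpFreeCompetitor N A B u Du) := by
  obtain ⟨n, rfl⟩ : ∃ n, N = n + 1 := ⟨N - 1, (Nat.succ_pred_eq_of_pos hN).symm⟩
  constructor
  · exact fun u Du h => trace_aux n A B u Du h
  · rintro htr ⟨u, Du, h⟩
    apply htr
    rw [Matrix.trace_sub, trace_aux n A B u Du h, sub_self]
end

section
/- Let Q = (0,1)^N be the open unit cube in ℝ^N and A, B two N×N real matrices. Let u : ℝ^N → ℝ^N be continuous on the closed cube [0,1]^N, differentiable at every point of Q with derivative Du(x), such that x ↦ tr(Du(x)) is Lebesgue integrable on Q and u(x) = Ax for every x ∈ ∂Q. Then ∫_Q |tr(Du(x)) − tr B| dx ≥ |tr(A − B)|. -/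
open MeasureTheory

private lemma trace_eq_sum_single (n : ℕ) (f : (Fin n → ℝ) →ₗ[ℝ] (Fin n → ℝ)) :
    LinearMap.trace ℝ (Fin n → ℝ) f = ∑ i, f (Pi.single i 1) i := by
  rw [LinearMap.trace_eq_matrix_trace ℝ (Pi.basisFun ℝ (Fin n))]
  simp [Matrix.trace, Matrix.diag, LinearMap.toMatrix_apply]

/-- Lower bound for the relaxed bulk density of the purely interfacial energy
`Ψ^{|·|}`: for any jump-free competitor `u`, continuous on the closed cube,
differentiable on `Q = (0,1)^N` with `tr(Du)` integrable and `u = Ax` on `∂Q`,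
one has `∫_Q |tr(Du x) − tr B| dx ≥ |tr(A − B)|`. -/
theorem integral_abs_trace_lower_bound (N : ℕ) (hN : 1 ≤ N)
    (A B : Matrix (Fin N) (Fin N) ℝ)
    (u : (Fin N → ℝ) → Fin N → ℝ)
    (Du : (Fin N → ℝ) → ((Fin N → ℝ) →L[ℝ] (Fin N → ℝ)))
    (hcont : ContinuousOn u (Set.Icc (0 : Fin N → ℝ) 1))
    (hdiff : ∀ x ∈ openCube N, HasFDerivAt u (Du x) x)
    (hint : IntegrableOn
      (fun x => LinearMap.trace ℝ (Fin N → ℝ) (Du x : (Fin N → ℝ) →ₗ[ℝ] (Fin N → ℝ)))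
      (openCube N))
    (hbdry : ∀ x ∈ frontier (openCube N), u x = A.mulVec x) :
    ∫ x in openCube N,
        |LinearMap.trace ℝ (Fin N → ℝ) (Du x : (Fin N → ℝ) →ₗ[ℝ] (Fin N → ℝ)) - B.trace| ≥
      |Matrix.trace (A - B)| := by
  obtain ⟨n, rfl⟩ : ∃ n, N = n + 1 := ⟨N - 1, (Nat.succ_pred_eq_of_pos hN).symm⟩
  set g : (Fin (n + 1) → ℝ) → ℝ :=
    fun x => LinearMap.trace ℝ (Fin (n + 1) → ℝ) (Du x : (Fin (n + 1) → ℝ) →ₗ[ℝ] _) with hg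
  -- basic facts about the cube
  have hQae : openCube (n + 1) =ᵐ[volume] Set.Icc (0 : Fin (n + 1) → ℝ) 1 := by
    exact
      (MeasureTheory.Measure.univ_pi_Ioo_ae_eq_Icc
        (μ := fun _ : Fin (n + 1) => (volume : Measure ℝ)) (f := fun _ => (0 : ℝ))
        (g := fun _ => (1 : ℝ)))
  have hfr : Set.Icc (0 : Fin (n + 1) → ℝ) 1 \ openCube (n + 1) ⊆
      frontier (openCube (n + 1)) := by
    have hcl : closure (openCube (n + 1)) = Set.Icc (0 : Fin (n + 1) → ℝ) 1 := by
      rw [openCube, closure_pi_set]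
      simp [Set.pi_univ_Icc]
      rfl
    have hio : interior (openCube (n + 1)) = openCube (n + 1) :=
      (isOpen_set_pi Set.finite_univ fun _ _ => isOpen_Ioo).interior_eq
    rw [frontier, hcl, hio]
  -- trace as a sum of diagonal entries of the derivative
  have hgsum : ∀ x, g x = ∑ i, Du x (Pi.single i 1) i := fun x =>
    trace_eq_sum_single (n + 1) _
  -- integrability on the closed cube
  have hint' : IntegrableOn (fun x => ∑ i, Du x (Pi.single i 1) i)
      (Set.Icc (0 : Fin (n + 1) → ℝ) 1) := by
    have h0 : IntegrableOn g (Set.Icc (0 : Fin (n + 1) → ℝ) 1) :=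
      hint.congr_set_ae hQae.symm
    exact h0.congr_fun (fun x _ => hgsum x) measurableSet_Icc
  -- divergence theorem
  have hdiv := integral_divergence_of_hasFDerivAt_off_countable
      (0 : Fin (n + 1) → ℝ) 1 zero_le_one u Du ∅ Set.countable_empty hcont
      (fun x hx => hdiff x (by simpa [openCube] using hx.1)) hint'
  -- compute the boundary term: it equals the trace of A
  have hface : ∀ (i : Fin (n + 1)),
      ((∫ x in Set.Icc ((0 : Fin (n+1) → ℝ) ∘ i.succAbove) ((1 : Fin (n+1) → ℝ) ∘ i.succAbove),
          u (i.insertNth ((1 : Fin (n+1) → ℝ) i) x) i) -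
        ∫ x in Set.Icc ((0 : Fin (n+1) → ℝ) ∘ i.succAbove) ((1 : Fin (n+1) → ℝ) ∘ i.succAbove),
          u (i.insertNth ((0 : Fin (n+1) → ℝ) i) x) i) = A i i := by
    intro i
    have hmem : ∀ (c : ℝ), c ∈ Set.Icc (0:ℝ) 1 →
        ∀ x ∈ Set.Icc ((0 : Fin (n+1) → ℝ) ∘ i.succAbove) ((1 : Fin (n+1) → ℝ) ∘ i.succAbove),
        (i.insertNth c x : Fin (n+1) → ℝ) ∈ Set.Icc (0 : Fin (n+1) → ℝ) 1 := by
      intro c hc x hx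
      rw [Fin.insertNth_mem_Icc]
      exact ⟨hc, hx⟩
    have hbd : ∀ (c : ℝ), c = 0 ∨ c = 1 →
        ∀ x ∈ Set.Icc ((0 : Fin (n+1) → ℝ) ∘ i.succAbove) ((1 : Fin (n+1) → ℝ) ∘ i.succAbove),
        u (i.insertNth c x) = A.mulVec (i.insertNth c x) := by
      intro c hc x hx
      apply hbdry
      apply hfr
      constructor
      · exact hmem c (by rcases hc with h | h <;> simp [h]) x hx
      · intro hmem'
        have := hmem' i (Set.mem_univ i)
        rw [Fin.insertNth_apply_same] at this
        rcases hc with h | h <;> simp [h] at this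
    -- replace u by A.mulVec on both faces
    simp only [Pi.one_apply, Pi.zero_apply]
    rw [setIntegral_congr_fun measurableSet_Icc
        (fun x hx => congrFun (hbd 1 (Or.inr rfl) x hx) i),
      setIntegral_congr_fun measurableSet_Icc
        (fun x hx => congrFun (hbd 0 (Or.inl rfl) x hx) i)]
    -- both integrands are continuous, hence integrable on the compact face
    have hcont' : ∀ (c : ℝ), Continuous fun x : Fin n → ℝ =>
        A.mulVec (i.insertNth c x) i := by
      intro c
      have h1 : Continuous fun x : Fin n → ℝ => (i.insertNth c x : Fin (n+1) → ℝ) :=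
        continuous_const.finInsertNth i continuous_id
      have h2 : Continuous fun v : Fin (n+1) → ℝ => A.mulVec v i := by
        simp only [Matrix.mulVec, dotProduct]
        exact continuous_finset_sum _ fun j _ =>
          continuous_const.mul (continuous_apply j)
      exact h2.comp h1
    have hi1 : IntegrableOn (fun x : Fin n → ℝ => A.mulVec (i.insertNth (1:ℝ) x) i)
        (Set.Icc ((0 : Fin (n+1) → ℝ) ∘ i.succAbove) ((1 : Fin (n+1) → ℝ) ∘ i.succAbove)) :=
      (hcont' 1).continuousOn.integrableOn_compact isCompact_Icc
    have hi0 : IntegrableOn (fun x : Fin n → ℝ => A.mulVec (i.insertNth (0:ℝ) x) i)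
        (Set.Icc ((0 : Fin (n+1) → ℝ) ∘ i.succAbove) ((1 : Fin (n+1) → ℝ) ∘ i.succAbove)) :=
      (hcont' 0).continuousOn.integrableOn_compact isCompact_Icc
    have h10 : ∀ x : Fin n → ℝ,
        A.mulVec (i.insertNth (1:ℝ) x) i - A.mulVec (i.insertNth (0:ℝ) x) i = A i i := by
      intro x
      have : (i.insertNth (1:ℝ) x : Fin (n+1) → ℝ) - i.insertNth (0:ℝ) x = Pi.single i 1 := by
        have h := Fin.insertNth_sub_same (α := fun _ : Fin (n+1) => ℝ) i 1 0 x
        simpa using h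
      calc A.mulVec (i.insertNth (1:ℝ) x) i - A.mulVec (i.insertNth (0:ℝ) x) i
          = A.mulVec ((i.insertNth (1:ℝ) x : Fin (n+1) → ℝ) - i.insertNth (0:ℝ) x) i := by
            rw [Matrix.mulVec_sub]; rfl
        _ = A.mulVec (Pi.single i 1) i := by rw [this]
        _ = A i i := by simp [Matrix.mulVec_single]
    have hvol : (volume (Set.Icc ((0 : Fin (n+1) → ℝ) ∘ i.succAbove)
        ((1 : Fin (n+1) → ℝ) ∘ i.succAbove))).toReal = 1 := by
      rw [Real.volume_Icc_pi_toReal (by intro j; simp [Function.comp])]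
      simp [Function.comp]
    rw [← integral_sub hi1 hi0]
    rw [setIntegral_congr_fun measurableSet_Icc (fun x _ => h10 x)]
    simp [hvol]
    rw [measureReal_def, Real.volume_Icc_pi_toReal (by intro j; simp)]
    simp
  -- hence the integral of the divergence over the cube is the trace of A
  have hkey : ∫ x in openCube (n + 1), g x = Matrix.trace A := by
    have h1 : ∫ x in openCube (n + 1), g x
        = ∫ x in Set.Icc (0 : Fin (n + 1) → ℝ) 1, ∑ i, Du x (Pi.single i 1) i := by
      rw [setIntegral_congr_set hQae]
      exact setIntegral_congr_fun measurableSet_Icc fun x _ => hgsum x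
    rw [h1, hdiv]
    rw [Finset.sum_congr rfl fun i _ => hface i]
    rfl
  -- the integrand below is integrable on the cube
  have hQvol : volume (openCube (n + 1)) = 1 := by
    rw [openCube, volume_pi_pi]
    simp
  have hintsub : IntegrableOn (fun x => g x - B.trace) (openCube (n + 1)) := by
    apply hint.sub
    exact integrableOn_const (by rw [hQvol]; exact ENNReal.one_ne_top)
  have hconst : IntegrableOn (fun _ : Fin (n + 1) → ℝ => B.trace) (openCube (n + 1)) :=
    integrableOn_const (by rw [hQvol]; exact ENNReal.one_ne_top)
  have hintval : ∫ x in openCube (n + 1), (g x - B.trace) = Matrix.trace (A - B) := by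
    rw [integral_sub hint hconst, hkey, setIntegral_const, Matrix.trace_sub, measureReal_def, hQvol]
    simp
  calc |Matrix.trace (A - B)| = |∫ x in openCube (n + 1), (g x - B.trace)| := by
        rw [hintval]
    _ ≤ ∫ x in openCube (n + 1), |g x - B.trace| := by
        simpa [Real.norm_eq_abs] using
          norm_integral_le_integral_norm (μ := volume.restrict (openCube (n + 1)))
            (fun x => g x - B.trace)
end

section
/- An N×N real matrix C has trace zero if and only if there exist finitely many pairs of vectors a₁, …, a_m, b₁, …, b_m ∈ ℝ^N with aᵢ · bᵢ = 0 for every i such that C = ∑_{i=1}^m aᵢ ⊗ bᵢ, where a ⊗ b denotes the rank-one matrix with entries (a ⊗ b)_{jk} = a_j b_k. -/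
open Matrix Finset

namespace TraceDecompAux

variable {N : ℕ}

def S (N : ℕ) : Set (Matrix (Fin N) (Fin N) ℝ) :=
  {C | ∃ (m : ℕ) (a b : Fin m → (Fin N → ℝ)),
    (∀ i, dotProduct (a i) (b i) = 0) ∧
    C = ∑ i, Matrix.vecMulVec (a i) (b i)}

lemma zero_mem : (0 : Matrix (Fin N) (Fin N) ℝ) ∈ S N :=
  ⟨0, Fin.elim0, Fin.elim0, fun i => i.elim0, by simp⟩

lemma add_mem {A B : Matrix (Fin N) (Fin N) ℝ} (hA : A ∈ S N) (hB : B ∈ S N) :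
    A + B ∈ S N := by
  obtain ⟨m1, a1, b1, h1, e1⟩ := hA
  obtain ⟨m2, a2, b2, h2, e2⟩ := hB
  refine ⟨m1 + m2, Fin.append a1 a2, Fin.append b1 b2, ?_, ?_⟩
  · intro i
    refine Fin.addCases (fun j => ?_) (fun j => ?_) i
    · simp [Fin.append_left, h1]
    · simp [Fin.append_right, h2]
  · rw [Fin.sum_univ_add]
    simp only [Fin.append_left, Fin.append_right]
    rw [← e1, ← e2]

lemma sum_mem {ι : Type*} (s : Finset ι) (f : ι → Matrix (Fin N) (Fin N) ℝ)
    (h : ∀ i ∈ s, f i ∈ S N) : (∑ i ∈ s, f i) ∈ S N :=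
  Finset.sum_induction f (· ∈ S N) (fun _ _ => add_mem) zero_mem h

lemma single_mem (a b : Fin N → ℝ) (h : dotProduct a b = 0) :
    Matrix.vecMulVec a b ∈ S N :=
  ⟨1, fun _ => a, fun _ => b, fun _ => h, by simp⟩

end TraceDecompAux

open TraceDecompAux Matrix

/-- An `N×N` real matrix has trace zero if and only if it is a finite sum of rank-one
matrices `aᵢ ⊗ bᵢ` built from orthogonal (isotropic) pairs of vectors `aᵢ · bᵢ = 0`. -/
theorem trace_eq_zero_iff_sum_vecMulVec_orthogonal (N : ℕ)
    (C : Matrix (Fin N) (Fin N) ℝ) :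
    Matrix.trace C = 0 ↔
      ∃ (m : ℕ) (a b : Fin m → (Fin N → ℝ)),
        (∀ i, dotProduct (a i) (b i) = 0) ∧
        C = ∑ i, Matrix.vecMulVec (a i) (b i) := by
  constructor
  · intro htr
    rcases Nat.eq_zero_or_pos N with hN | hN
    · subst hN
      have : C = 0 := by ext i; exact i.elim0
      rw [this]; exact zero_mem
    haveI : NeZero N := ⟨hN.ne'⟩
    set e : Fin N → (Fin N → ℝ) := fun j => Pi.single j (1 : ℝ) with he
    set E : Fin N → Fin N → Matrix (Fin N) (Fin N) ℝ :=
      fun j k => Matrix.vecMulVec (e j) (e k) with hE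
    have hEmem : ∀ j k, j ≠ k → E j k ∈ S N := by
      intro j k hjk
      apply single_mem
      simp [he, dotProduct, Pi.single_apply, hjk, Ne.symm hjk]
    have hediag : ∀ (d : ℝ) (j : Fin N), d • (E j j - E 0 0) ∈ S N := by
      intro d j
      rcases eq_or_ne j 0 with rfl | hj
      · simpa using TraceDecompAux.zero_mem
      refine ⟨3, ![d • (e j + e 0), d • e j, -(d • e 0)], ![e j - e 0, e 0, e j], ?_, ?_⟩
      · intro i
        fin_cases i <;>
          simp [he, dotProduct_sub, sub_dotProduct, add_dotProduct,
            smul_dotProduct, neg_dotProduct, single_dotProduct,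
            Pi.single_apply, hj, Ne.symm hj]
      · ext i k
        simp only [Fin.sum_univ_three, Matrix.cons_val_zero, Matrix.cons_val_one,
          Matrix.head_cons, Matrix.add_apply, Matrix.sub_apply, Matrix.smul_apply,
          Matrix.vecMulVec_apply, Pi.add_apply, Pi.sub_apply, Pi.smul_apply,
          Pi.neg_apply, smul_eq_mul, hE, he, Pi.single_apply, Matrix.cons_val_two,
          Matrix.tail_cons]
        split_ifs <;> ring
    -- decomposition
    have hdecomp : C = ∑ p : Fin N × Fin N,
        (if p.1 = p.2 then C p.1 p.1 • (E p.1 p.1 - E 0 0)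
         else C p.1 p.2 • E p.1 p.2) := by
      have h1 : ∀ p : Fin N × Fin N,
          (if p.1 = p.2 then C p.1 p.1 • (E p.1 p.1 - E 0 0)
           else C p.1 p.2 • E p.1 p.2)
          = C p.1 p.2 • E p.1 p.2 - (if p.1 = p.2 then C p.1 p.1 • E 0 0 else 0) := by
        intro p
        split_ifs with h
        · rw [smul_sub, h]
        · simp
      rw [Finset.sum_congr rfl (fun p _ => h1 p), Finset.sum_sub_distrib]
      have h2 : ∑ p : Fin N × Fin N, C p.1 p.2 • E p.1 p.2 = C := by
        ext i k
        simp [hE, he, Matrix.vecMulVec_apply, Pi.single_apply, Fintype.sum_prod_type,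
          Matrix.sum_apply, Matrix.smul_apply, mul_ite, ite_and, Finset.sum_ite_eq,
          Finset.sum_ite_eq']
      have h3 : ∑ p : Fin N × Fin N, (if p.1 = p.2 then C p.1 p.1 • E 0 0 else 0)
          = Matrix.trace C • E 0 0 := by
        rw [Fintype.sum_prod_type]
        simp only [Finset.sum_ite_eq, Finset.sum_ite_eq', Finset.mem_univ, if_true]
        rw [Matrix.trace, ← Finset.sum_smul]
        rfl
      rw [h2, h3, htr, zero_smul, sub_zero]
    have hT : ∀ p : Fin N × Fin N,
        (if p.1 = p.2 then C p.1 p.1 • (E p.1 p.1 - E 0 0)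
         else C p.1 p.2 • E p.1 p.2) ∈ S N := by
      intro p
      split_ifs with h
      · exact hediag _ _
      · obtain ⟨m, a, b, hab, hsum⟩ := hEmem p.1 p.2 h
        refine ⟨m, fun i => C p.1 p.2 • a i, b, fun i => ?_, ?_⟩
        · simp [smul_dotProduct, hab i]
        · rw [hsum, Finset.smul_sum]
          refine Finset.sum_congr rfl fun i _ => ?_
          ext x y
          simp [Matrix.vecMulVec_apply]
          ring
    rw [hdecomp]
    exact sum_mem _ _ fun p _ => hT p
  · rintro ⟨m, a, b, hab, rfl⟩
    rw [Matrix.trace_sum]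
    refine Finset.sum_eq_zero fun i _ => ?_
    have := hab i
    simpa [Matrix.trace, Matrix.diag, Matrix.vecMulVec_apply, dotProduct] using this
end

section
/- One-dimensional approximation theorem for structured deformations: let g : [0,1] → ℝ be Lipschitz with constant L, let G : (0,1) → ℝ be Lebesgue integrable, and for each integer n ≥ 1 define u_n : (0,1) → ℝ by u_n(x) = g(⌊nx⌋/n) + ∫_{⌊nx⌋/n}^{x} G(t) dt. Then (i) ∫₀¹ |u_n(x) − g(x)| dx ≤ (L + ∫₀¹ |G(t)| dt)/n, so that u_n → g in L¹((0,1)); and (ii) for Lebesgue-almost every x ∈ (0,1), u_n is differentiable at x with u_n'(x) = G(x). -/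
open MeasureTheory Filter
open scoped NNReal Topology

/-- Almost-everywhere fundamental theorem of calculus for an integrable function:
the primitive `y ↦ ∫ t in 0..y, f t` is a.e. differentiable with derivative `f`. -/
lemma ae_hasDerivAt_primitive (f : ℝ → ℝ) (hf : Integrable f) :
    ∀ᵐ x : ℝ, HasDerivAt (fun y => ∫ t in (0:ℝ)..y, f t) (f x) x := by
  filter_upwards [IsUnifLocDoublingMeasure.ae_tendsto_average_norm_sub
    (μ := (volume : Measure ℝ)) hf.locallyIntegrable 1] with x hx
  have key : Filter.Tendsto (fun y : ℝ => ⨍ t in Metric.closedBall x |y - x|, ‖f t - f x‖)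
      (𝓝[≠] x) (𝓝 0) := by
    refine hx (fun _ => x) (fun y => |y - x|) ?_ ?_
    · refine tendsto_nhdsWithin_of_tendsto_nhds_of_eventually_within _ ?_ ?_
      · have h1 : Filter.Tendsto (fun y : ℝ => |y - x|) (𝓝 x) (𝓝 |x - x|) :=
          ((continuous_id.sub continuous_const).abs.tendsto x)
        simpa using h1.mono_left nhdsWithin_le_nhds
      · exact eventually_mem_nhdsWithin.mono fun y hy =>
          Set.mem_Ioi.2 (abs_pos.2 (sub_ne_zero.2 hy))
    · exact Filter.Eventually.of_forall fun y => by
        simp [Metric.mem_closedBall, abs_nonneg]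
  rw [hasDerivAt_iff_isLittleO, Asymptotics.isLittleO_iff]
  intro c hc
  have hev : ∀ᶠ y in 𝓝[≠] x,
      ‖(∫ t in (0:ℝ)..y, f t) - (∫ t in (0:ℝ)..x, f t) - (y - x) • f x‖ ≤ c * ‖y - x‖ := by
    filter_upwards [key.eventually (gt_mem_nhds (half_pos hc)), self_mem_nhdsWithin]
      with y hy hyx
    have hyx' : (0:ℝ) < |y - x| := abs_pos.2 (sub_ne_zero.2 hyx)
    have h1 : (∫ t in (0:ℝ)..y, f t) - (∫ t in (0:ℝ)..x, f t) = ∫ t in x..y, f t :=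
      intervalIntegral.integral_interval_sub_left hf.intervalIntegrable hf.intervalIntegrable
    have h2 : (y - x) • f x = ∫ t in x..y, f x := by
      rw [intervalIntegral.integral_const]
    rw [h1, h2, ← intervalIntegral.integral_sub hf.intervalIntegrable intervalIntegrable_const]
    have h3 : ‖∫ t in x..y, (f t - f x)‖ ≤ ∫ t in Set.uIoc x y, ‖f t - f x‖ :=
      intervalIntegral.norm_integral_le_integral_norm_uIoc
    have hsub : Set.uIoc x y ⊆ Metric.closedBall x |y - x| := by
      intro t ht
      rw [Set.mem_uIoc] at ht
      rw [Metric.mem_closedBall, Real.dist_eq]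
      rcases ht with ⟨h1', h2'⟩ | ⟨h1', h2'⟩
      · rw [abs_of_pos (by linarith)]
        have := le_abs_self (y - x); linarith
      · rw [abs_of_nonpos (by linarith)]
        have := neg_le_abs (y - x); linarith
    have h4 : ∫ t in Set.uIoc x y, ‖f t - f x‖
        ≤ ∫ t in Metric.closedBall x |y - x|, ‖f t - f x‖ :=
      setIntegral_mono_set
        ((hf.integrableOn.sub (integrableOn_const (by
          rw [Real.volume_closedBall]; exact ENNReal.ofReal_ne_top))).norm)
        (Filter.Eventually.of_forall fun t => norm_nonneg _) (HasSubset.Subset.eventuallyLE hsub)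
    have h5 : ∫ t in Metric.closedBall x |y - x|, ‖f t - f x‖
        = (2 * |y - x|) * ⨍ t in Metric.closedBall x |y - x|, ‖f t - f x‖ := by
      rw [setAverage_eq, measureReal_def, Real.volume_closedBall, ENNReal.toReal_ofReal (by positivity),
        smul_eq_mul, ← mul_assoc, mul_inv_cancel₀ (by positivity), one_mul]
    calc ‖∫ t in x..y, (f t - f x)‖ ≤ ∫ t in Set.uIoc x y, ‖f t - f x‖ := h3
      _ ≤ ∫ t in Metric.closedBall x |y - x|, ‖f t - f x‖ := h4
      _ = (2 * |y - x|) * ⨍ t in Metric.closedBall x |y - x|, ‖f t - f x‖ := h5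
      _ ≤ (2 * |y - x|) * (c / 2) := by
          exact mul_le_mul_of_nonneg_left hy.le (by positivity)
      _ = c * ‖y - x‖ := by rw [Real.norm_eq_abs]; ring
  rw [eventually_nhdsWithin_iff] at hev
  filter_upwards [hev] with y hy
  by_cases h : y = x
  · simp [h]
  · exact hy h

/-- Replacing the integrand by its indicator on `(0,1)` does not change interval
integrals over subintervals of `[0,1]`. -/
lemma integral_eq_indicator_aux (f : ℝ → ℝ) {a b : ℝ} (ha : 0 ≤ a) (hab : a ≤ b) (hb : b ≤ 1) :
    ∫ t in a..b, f t = ∫ t in a..b, Set.indicator (Set.Ioo (0:ℝ) 1) f t := by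
  rw [intervalIntegral.integral_of_le hab, intervalIntegral.integral_of_le hab]
  refine (setIntegral_congr_ae measurableSet_Ioc ?_).symm
  have h1 : ∀ᵐ t : ℝ, t ≠ (1:ℝ) := by
    rw [ae_iff]
    simp only [ne_eq, not_not, Set.setOf_eq_eq_singleton]
    exact Real.volume_singleton
  filter_upwards [h1] with t ht htmem
  exact Set.indicator_of_mem (Set.mem_Ioo.mpr
    ⟨lt_of_le_of_lt ha htmem.1, lt_of_le_of_ne (le_trans htmem.2 hb) ht⟩) f

/-- Almost every real number is not of the form `k/n` with `k : ℤ`. -/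
lemma ae_ne_int_div (n : ℕ) : ∀ᵐ x : ℝ, ∀ k : ℤ, x ≠ (k:ℝ)/n := by
  have hc : Set.Countable {x : ℝ | ∃ k : ℤ, x = (k:ℝ)/n} := by
    have he : {x : ℝ | ∃ k : ℤ, x = (k:ℝ)/n} = Set.range (fun k : ℤ => (k:ℝ)/n) := by
      ext t; simp [eq_comm]
    rw [he]; exact Set.countable_range _
  have h0 := hc.measure_zero (volume : Measure ℝ)
  rw [ae_iff]
  simpa [not_forall] using h0

/-- One-dimensional approximation theorem for structured deformations: if `g` is
`L`-Lipschitz on `[0,1]`, `G` is integrable on `(0,1)`, and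
`u_n x = g(⌊nx⌋/n) + ∫_{⌊nx⌋/n}^{x} G(t) dt`, then
(i) `∫₀¹ |u_n − g| ≤ (L + ∫₀¹ |G|)/n`, so `u_n → g` in `L¹((0,1))`, and
(ii) for a.e. `x ∈ (0,1)` and every `n ≥ 1`, `u_n` is differentiable at `x` with
`u_n'(x) = G(x)`. -/
theorem oneD_approximation_structured_deformations
    (L : ℝ≥0) (g : ℝ → ℝ) (hg : LipschitzOnWith L g (Set.Icc (0 : ℝ) 1))
    (G : ℝ → ℝ) (hG : IntegrableOn G (Set.Ioo (0 : ℝ) 1))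
    (u : ℕ → ℝ → ℝ)
    (hu : ∀ n : ℕ, ∀ x : ℝ, u n x =
      g ((⌊(n : ℝ) * x⌋ : ℝ) / n) + ∫ t in ((⌊(n : ℝ) * x⌋ : ℝ) / n)..x, G t) :
    (∀ n : ℕ, 1 ≤ n →
      ∫ x in (0 : ℝ)..1, |u n x - g x| ≤ ((L : ℝ) + ∫ t in (0 : ℝ)..1, |G t|) / n) ∧
    Tendsto (fun n : ℕ => ∫ x in (0 : ℝ)..1, |u n x - g x|) atTop (nhds 0) ∧
    (∀ n : ℕ, 1 ≤ n → ∀ᵐ x ∂(volume.restrict (Set.Ioo (0 : ℝ) 1)),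
      HasDerivAt (u n) (G x) x) := by
  set Gi : ℝ → ℝ := Set.indicator (Set.Ioo (0:ℝ) 1) G with hGidef
  have hGi : Integrable Gi := (integrable_indicator_iff measurableSet_Ioo).2 hG
  have habs_eq : ∀ t, |Gi t| = Set.indicator (Set.Ioo (0:ℝ) 1) (fun s => |G s|) t := by
    intro t
    by_cases h : t ∈ Set.Ioo (0:ℝ) 1
    · simp [hGidef, Set.indicator_of_mem h]
    · simp [hGidef, Set.indicator_of_notMem h]
  -- the main estimate (i)
  have part1 : ∀ n : ℕ, 1 ≤ n →
      ∫ x in (0 : ℝ)..1, |u n x - g x| ≤ ((L : ℝ) + ∫ t in (0 : ℝ)..1, |G t|) / n := by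
    intro n hn
    have hN : (0:ℝ) < n := by exact_mod_cast hn
    set I : ℕ → ℝ := fun k => ∫ t in ((k:ℝ)/n)..(((k:ℝ)+1)/n), |Gi t| with hIdef
    set φ : ℝ → ℝ := fun x => (L:ℝ)/n + ∑ k ∈ Finset.range n,
      Set.indicator (Set.Ioc ((k:ℝ)/n) (((k:ℝ)+1)/n)) (fun _ => I k) x with hφdef
    haveI : IsFiniteMeasure (volume.restrict (Set.Ioc (0:ℝ) 1)) := by
      constructor
      rw [Measure.restrict_apply_univ, Real.volume_Ioc]
      exact ENNReal.ofReal_lt_top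
    have hφint : Integrable φ (volume.restrict (Set.Ioc (0:ℝ) 1)) := by
      refine (integrable_const _).add (integrable_finset_sum _ fun k _ => ?_)
      exact (integrable_const _).indicator measurableSet_Ioc
    have hbound : ∀ᵐ x ∂(volume.restrict (Set.Ioc (0:ℝ) 1)), |u n x - g x| ≤ φ x := by
      filter_upwards [ae_restrict_mem measurableSet_Ioc, ae_restrict_of_ae (ae_ne_int_div n)]
        with x hx hxk
      have hx0 : 0 < x := hx.1
      have hx1' : x < 1 := by
        rcases lt_or_eq_of_le hx.2 with h | h
        · exact h
        · exact absurd (by rw [h]; push_cast; rw [div_self hN.ne']) (hxk (n:ℤ))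
      set k : ℤ := ⌊(n:ℝ) * x⌋ with hk
      have hkx : (k:ℝ)/n < x := by
        rw [div_lt_iff₀ hN]
        rcases lt_or_eq_of_le (Int.floor_le ((n:ℝ) * x)) with h | h
        · linarith [h]
        · exact absurd (by rw [eq_div_iff hN.ne']; linarith [h]) (hxk k)
      have hxk1 : x < ((k:ℝ)+1)/n := by
        rw [lt_div_iff₀ hN]
        have := Int.lt_floor_add_one ((n:ℝ)*x); linarith
      have hk0 : (0:ℝ) ≤ (k:ℝ)/n := by
        apply div_nonneg _ hN.le
        have h : (0:ℤ) ≤ k := Int.floor_nonneg.2 (by positivity)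
        exact_mod_cast h
      have hk1 : ((k:ℝ)+1)/n ≤ 1 := by
        rw [div_le_one hN]
        have h1 : (k:ℝ) < n := lt_of_le_of_lt (Int.floor_le _) (by nlinarith)
        have h2 : k < (n:ℤ) := by exact_mod_cast h1
        have h3 : k + 1 ≤ (n:ℤ) := h2
        have h4 : ((k+1:ℤ):ℝ) ≤ ((n:ℤ):ℝ) := by exact_mod_cast h3
        push_cast at h4; linarith
      -- natural-number index
      have hknn : (0:ℤ) ≤ k := Int.floor_nonneg.2 (by positivity)
      set m : ℕ := k.toNat with hm
      have hmk : (m:ℝ) = (k:ℝ) := by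
        have := Int.toNat_of_nonneg hknn
        exact_mod_cast congrArg (Int.cast : ℤ → ℝ) this
      have hmn : m < n := by
        have h1 : (k:ℝ) < n := lt_of_le_of_lt (Int.floor_le _) (by nlinarith)
        have h2 : ((m:ℕ):ℝ) < (n:ℝ) := by rw [hmk]; exact h1
        exact_mod_cast h2
      -- Lipschitz part
      have hgl : |g ((k:ℝ)/n) - g x| ≤ (L:ℝ)/n := by
        have h1 := hg.dist_le_mul ((k:ℝ)/n) ⟨hk0, by linarith⟩ x ⟨hx0.le, hx1'.le⟩
        rw [Real.dist_eq, Real.dist_eq] at h1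
        have h2 : |(k:ℝ)/n - x| ≤ 1/n := by
          rw [abs_of_nonpos (by linarith)]
          have hdiff : ((k:ℝ)+1)/n - (k:ℝ)/n = 1/n := by field_simp; ring
          linarith
        calc |g ((k:ℝ)/n) - g x| ≤ (L:ℝ) * |(k:ℝ)/n - x| := h1
          _ ≤ (L:ℝ) * (1/n) := by
              exact mul_le_mul_of_nonneg_left h2 (NNReal.coe_nonneg L)
          _ = (L:ℝ)/n := by ring
      -- integral part
      have hGint_eq : ∫ t in ((k:ℝ)/n)..x, G t = ∫ t in ((k:ℝ)/n)..x, Gi t :=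
        integral_eq_indicator_aux G hk0 hkx.le hx1'.le
      have hIb : |∫ t in ((k:ℝ)/n)..x, Gi t| ≤ I m := by
        calc |∫ t in ((k:ℝ)/n)..x, Gi t| ≤ ∫ t in ((k:ℝ)/n)..x, |Gi t| :=
              intervalIntegral.abs_integral_le_integral_abs hkx.le
          _ ≤ ∫ t in ((k:ℝ)/n)..(((k:ℝ)+1)/n), |Gi t| := by
              refine intervalIntegral.integral_mono_interval le_rfl hkx.le hxk1.le
                (Filter.Eventually.of_forall fun t => abs_nonneg _)
                hGi.abs.intervalIntegrable
          _ = I m := by rw [hIdef]; simp only [hmk]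
      -- the indicator sum picks out the term `m`
      have hsum : ∑ j ∈ Finset.range n,
          Set.indicator (Set.Ioc ((j:ℝ)/n) (((j:ℝ)+1)/n)) (fun _ => I j) x = I m := by
        rw [Finset.sum_eq_single_of_mem m (Finset.mem_range.2 hmn)]
        · exact Set.indicator_of_mem (Set.mem_Ioc.mpr
            ⟨by rw [hmk]; exact hkx, by rw [hmk]; exact hxk1.le⟩) _
        · intro j _ hjm
          apply Set.indicator_of_notMem
          intro hmem
          have hj1 : (j:ℝ)/n < x := hmem.1
          have hj2 : x < ((j:ℝ)+1)/n := lt_of_le_of_ne hmem.2 (by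
            intro h
            exact hxk ((j:ℤ)+1) (by rw [h]; push_cast; ring))
          rw [div_lt_iff₀ hN] at hj1
          rw [lt_div_iff₀ hN] at hj2
          have : k = (j:ℤ) := by
            rw [hk]
            rw [Int.floor_eq_iff]
            constructor
            · push_cast; linarith
            · push_cast; linarith
          exact hjm (by
            have h5 : m = ((j:ℤ)).toNat := by rw [hm, this]
            simpa using h5.symm)
      -- combine
      rw [hu n x, ← hk]
      have : g ((k:ℝ)/n) + (∫ t in ((k:ℝ)/n)..x, G t) - g x
          = (g ((k:ℝ)/n) - g x) + ∫ t in ((k:ℝ)/n)..x, Gi t := by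
        rw [hGint_eq]; ring
      rw [this, hφdef]
      calc |(g ((k:ℝ)/n) - g x) + ∫ t in ((k:ℝ)/n)..x, Gi t|
          ≤ |g ((k:ℝ)/n) - g x| + |∫ t in ((k:ℝ)/n)..x, Gi t| := abs_add_le _ _
        _ ≤ (L:ℝ)/n + I m := add_le_add hgl hIb
        _ = (L:ℝ)/n + ∑ j ∈ Finset.range n,
            Set.indicator (Set.Ioc ((j:ℝ)/n) (((j:ℝ)+1)/n)) (fun _ => I j) x := by rw [hsum]
    -- now integrate the bound
    have hadj : ∑ k ∈ Finset.range n, I k = ∫ t in (0:ℝ)..1, |Gi t| := by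
      have h1 := intervalIntegral.sum_integral_adjacent_intervals
        (a := fun i : ℕ => (i:ℝ)/n) (f := fun t => |Gi t|) (μ := volume) (n := n)
        (fun k _ => hGi.abs.intervalIntegrable)
      have h2 : ∀ k : ℕ, (((k+1:ℕ)):ℝ)/n = ((k:ℝ)+1)/n := by intro k; push_cast; ring
      calc ∑ k ∈ Finset.range n, I k
          = ∑ k ∈ Finset.range n, ∫ t in ((k:ℝ)/n)..(((k+1:ℕ)):ℝ)/n, |Gi t| := by
            refine Finset.sum_congr rfl fun k _ => ?_
            rw [hIdef, h2 k]
        _ = ∫ t in ((0:ℕ):ℝ)/n..((n:ℕ):ℝ)/n, |Gi t| := h1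
        _ = ∫ t in (0:ℝ)..1, |Gi t| := by
            norm_num [div_self hN.ne']
    have hGabs_eq : ∫ t in (0:ℝ)..1, |G t| = ∫ t in (0:ℝ)..1, |Gi t| := by
      rw [integral_eq_indicator_aux (fun t => |G t|) le_rfl zero_le_one le_rfl]
      exact intervalIntegral.integral_congr fun t _ => (habs_eq t).symm
    have hφval : ∫ x in Set.Ioc (0:ℝ) 1, φ x
        = (L:ℝ)/n + (∑ k ∈ Finset.range n, I k) * (1/n) := by
      rw [hφdef]
      rw [integral_add (integrable_const _) (integrable_finset_sum _ fun k _ =>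
        (integrable_const _).indicator measurableSet_Ioc)]
      congr 1
      · rw [setIntegral_const]
        simp [Real.volume_Ioc]
      · rw [integral_finset_sum _ fun k _ => (integrable_const _).indicator measurableSet_Ioc,
          Finset.sum_mul]
        refine Finset.sum_congr rfl fun k hk => ?_
        have hkn : (k:ℝ) < n := by exact_mod_cast Finset.mem_range.1 hk
        have hsub : Set.Ioc ((k:ℝ)/n) (((k:ℝ)+1)/n) ⊆ Set.Ioc (0:ℝ) 1 := by
          apply Set.Ioc_subset_Ioc
          · positivity
          · rw [div_le_one hN]
            have h6 : (k+1:ℕ) ≤ n := Finset.mem_range.1 hk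
            exact_mod_cast h6
        rw [setIntegral_indicator measurableSet_Ioc,
          Set.inter_eq_self_of_subset_right hsub, setIntegral_const]
        rw [measureReal_def, Real.volume_Ioc, smul_eq_mul]
        have hlen : ((k:ℝ)+1)/n - (k:ℝ)/n = 1/n := by ring
        rw [hlen, ENNReal.toReal_ofReal (by positivity)]
        ring
    calc ∫ x in (0:ℝ)..1, |u n x - g x|
        = ∫ x in Set.Ioc (0:ℝ) 1, |u n x - g x| := by
          rw [intervalIntegral.integral_of_le zero_le_one]
      _ ≤ ∫ x in Set.Ioc (0:ℝ) 1, φ x :=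
          integral_mono_of_nonneg (Filter.Eventually.of_forall fun x => abs_nonneg _)
            hφint hbound
      _ = (L:ℝ)/n + (∑ k ∈ Finset.range n, I k) * (1/n) := hφval
      _ = ((L : ℝ) + ∫ t in (0 : ℝ)..1, |G t|) / n := by
          rw [hadj, hGabs_eq]; ring
  refine ⟨part1, ?_, ?_⟩
  · -- L¹ convergence by squeezing
    refine squeeze_zero' (Filter.Eventually.of_forall fun n =>
      intervalIntegral.integral_nonneg zero_le_one fun t _ => abs_nonneg _)
      (eventually_atTop.2 ⟨1, part1⟩) ?_
    exact tendsto_const_div_atTop_nhds_zero_nat _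
  · -- a.e. differentiability
    intro n hn
    have hN : (0:ℝ) < n := by exact_mod_cast hn
    filter_upwards [ae_restrict_mem measurableSet_Ioo, ae_restrict_of_ae (ae_ne_int_div n),
      ae_restrict_of_ae (ae_hasDerivAt_primitive Gi hGi)] with x hx hxk hder
    have hx0 : 0 < x := hx.1
    have hx1' : x < 1 := hx.2
    set k : ℤ := ⌊(n:ℝ) * x⌋ with hk
    have hkx : (k:ℝ)/n < x := by
      rw [div_lt_iff₀ hN]
      rcases lt_or_eq_of_le (Int.floor_le ((n:ℝ) * x)) with h | h
      · linarith [h]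
      · exact absurd (by rw [eq_div_iff hN.ne']; linarith [h]) (hxk k)
    have hxk1 : x < ((k:ℝ)+1)/n := by
      rw [lt_div_iff₀ hN]
      have := Int.lt_floor_add_one ((n:ℝ)*x); linarith
    have hk0 : (0:ℝ) ≤ (k:ℝ)/n := by
      apply div_nonneg _ hN.le
      have h : (0:ℤ) ≤ k := Int.floor_nonneg.2 (by positivity)
      exact_mod_cast h
    have hGix : Gi x = G x := Set.indicator_of_mem hx G
    -- local identification of u n
    have hloc : u n =ᶠ[𝓝 x] fun y =>
        (g ((k:ℝ)/n) - ∫ t in (0:ℝ)..((k:ℝ)/n), Gi t) + ∫ t in (0:ℝ)..y, Gi t := by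
      have hmem : Set.Ioo ((k:ℝ)/n) (min (((k:ℝ)+1)/n) 1) ∈ 𝓝 x :=
        Ioo_mem_nhds hkx (lt_min hxk1 hx1')
      refine Filter.eventuallyEq_of_mem hmem fun y hy => ?_
      have hy1 : (k:ℝ)/n < y := hy.1
      have hy2 : y < ((k:ℝ)+1)/n := lt_of_lt_of_le hy.2 (min_le_left _ _)
      have hy3 : y < 1 := lt_of_lt_of_le hy.2 (min_le_right _ _)
      have hfl : ⌊(n:ℝ) * y⌋ = k := by
        rw [Int.floor_eq_iff]
        constructor
        · rw [div_lt_iff₀ hN] at hy1; linarith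
        · rw [lt_div_iff₀ hN] at hy2; push_cast; linarith
      have h1 : ∫ t in ((k:ℝ)/n)..y, G t = ∫ t in ((k:ℝ)/n)..y, Gi t :=
        integral_eq_indicator_aux G hk0 hy1.le hy3.le
      have h2 : ∫ t in ((k:ℝ)/n)..y, Gi t
          = (∫ t in (0:ℝ)..y, Gi t) - ∫ t in (0:ℝ)..((k:ℝ)/n), Gi t :=
        (intervalIntegral.integral_interval_sub_left hGi.intervalIntegrable
          hGi.intervalIntegrable).symm
      rw [hu n y, hfl, h1, h2]
      ring
    have hD : HasDerivAt (fun y =>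
        (g ((k:ℝ)/n) - ∫ t in (0:ℝ)..((k:ℝ)/n), Gi t) + ∫ t in (0:ℝ)..y, Gi t) (Gi x) x :=
      hder.const_add _
    have := hD.congr_of_eventuallyEq hloc
    rwa [hGix] at this
end
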